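/- Let G = (V, E) be a finite graph with n vertices and m edges, M = m + 1, and L(β) = M·Σ_j(|β_j|_2 + |β_j − 1|_2) + Σ_{(u,v)∈E}|β_u + β_v − 1|_2 for β : V → ℚ. For any integer K, G has a cut of size at least K if and only if there exists β : V → ℚ with L(β) ≤ M·n + m − K. -/

import Mathlib

lemma pn_le_half {q : ℚ} (h : padicNorm 2 q < 1) : padicNorm 2 q ≤ 1/2 := by
  rcases eq_or_ne q 0 with rfl | hq
  · rw [padicNorm.zero]; norm_num
  · obtain ⟨z, hz⟩ := padicNorm.values_discrete (p := 2) hq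
    rw [show ((2:ℕ):ℚ) = (2:ℚ) from by norm_num] at hz
    rw [hz] at h ⊢
    have hzpos : (1:ℤ) ≤ z := by
      by_contra hc
      push_neg at hc
      have h0 : (0:ℤ) ≤ -z := by omega
      have := one_le_zpow₀ (by norm_num : (1:ℚ) ≤ 2) h0
      linarith
    calc (2:ℚ) ^ (-z) ≤ (2:ℚ) ^ (-1:ℤ) := by
          apply zpow_le_zpow_right₀ (by norm_num : (1:ℚ) ≤ 2); omega
      _ = 1/2 := by norm_num

lemma pn_two_le {q : ℚ} (h : 1 < padicNorm 2 q) : 2 ≤ padicNorm 2 q := by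
  have hq : q ≠ 0 := by
    rintro rfl; rw [padicNorm.zero] at h; linarith
  obtain ⟨z, hz⟩ := padicNorm.values_discrete (p := 2) hq
  rw [show ((2:ℕ):ℚ) = (2:ℚ) from by norm_num] at hz
  rw [hz] at h ⊢
  have hzneg : z ≤ -1 := by
    by_contra hc
    push_neg at hc
    have h0 : -z ≤ 0 := by omega
    have := zpow_le_one_of_nonpos₀ (by norm_num : (1:ℚ) ≤ 2) h0
    linarith
  calc (2:ℚ) = (2:ℚ) ^ (1:ℤ) := by norm_num
    _ ≤ (2:ℚ) ^ (-z) := by apply zpow_le_zpow_right₀ (by norm_num : (1:ℚ) ≤ 2); omega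

lemma odd_parts {q : ℚ} (h : padicNorm 2 q = 1) : Odd q.num ∧ Odd (q.den:ℤ) := by
  have hq : q ≠ 0 := by rintro rfl; rw [padicNorm.zero] at h; norm_num at h
  have hrw : padicNorm 2 (q.num:ℚ) / padicNorm 2 ((q.den:ℤ):ℚ) = 1 := by
    rw [← padicNorm.div]
    rw [show ((q.num:ℚ) / ((q.den:ℤ):ℚ)) = q from by push_cast; exact Rat.num_div_den q, h]
  have hdnz : ((q.den:ℤ):ℚ) ≠ 0 := by
    push_cast
    exact Nat.cast_ne_zero.mpr q.den_ne_zero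
  have hdn0 : padicNorm 2 ((q.den:ℤ):ℚ) ≠ 0 := padicNorm.nonzero hdnz
  have heq : padicNorm 2 (q.num:ℚ) = padicNorm 2 ((q.den:ℤ):ℚ) := by
    rw [div_eq_one_iff_eq hdn0] at hrw; exact hrw
  by_cases hd : (2:ℤ) ∣ (q.den:ℤ)
  · exfalso
    have hdlt : padicNorm 2 ((q.den:ℤ):ℚ) < 1 := (padicNorm.int_lt_one_iff _).mpr hd
    have hnlt : padicNorm 2 (q.num:ℚ) < 1 := heq ▸ hdlt
    have hnd : (2:ℤ) ∣ q.num := (padicNorm.int_lt_one_iff _).mp hnlt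
    have h1 : 2 ∣ q.num.natAbs := by
      have := Int.natAbs_dvd_natAbs.mpr hnd; simpa using this
    have h2 : 2 ∣ q.den := by
      have := Int.natAbs_dvd_natAbs.mpr hd; simpa using this
    have : (2:ℕ) ∣ 1 := q.reduced ▸ Nat.dvd_gcd h1 h2
    norm_num at this
  · have hden1 : padicNorm 2 ((q.den:ℤ):ℚ) = 1 := (padicNorm.int_eq_one_iff _).mpr hd
    have hnum1 : padicNorm 2 (q.num:ℚ) = 1 := heq ▸ hden1
    have hnd : ¬ (2:ℤ) ∣ q.num := (padicNorm.int_eq_one_iff _).mp hnum1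
    exact ⟨Int.odd_iff.mpr (by omega), Int.odd_iff.mpr (by omega)⟩

lemma pn_add_le_half {q r : ℚ} (hq : padicNorm 2 q = 1) (hr : padicNorm 2 r = 1) :
    padicNorm 2 (q + r) ≤ 1/2 := by
  obtain ⟨hqn, hqd⟩ := odd_parts hq
  obtain ⟨hrn, hrd⟩ := odd_parts hr
  set N : ℤ := q.num * r.den + r.num * q.den with hN
  set D : ℤ := (q.den:ℤ) * (r.den:ℤ) with hD
  have hNe : Even N := (hqn.mul hrd).add_odd (hrn.mul hqd)
  have hDo : Odd D := hqd.mul hrd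
  have hqd0 : ((q.den:ℕ):ℚ) ≠ 0 := Nat.cast_ne_zero.mpr q.den_ne_zero
  have hrd0 : ((r.den:ℕ):ℚ) ≠ 0 := Nat.cast_ne_zero.mpr r.den_ne_zero
  have hqnum : (q.num:ℚ) = q * (q.den:ℚ) := by
    have := Rat.num_div_den q; rw [div_eq_iff hqd0] at this; exact this
  have hrnum : (r.num:ℚ) = r * (r.den:ℚ) := by
    have := Rat.num_div_den r; rw [div_eq_iff hrd0] at this; exact this
  have hD0 : ((D:ℤ):ℚ) ≠ 0 := by rw [hD]; push_cast; exact mul_ne_zero hqd0 hrd0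
  have hsum : q + r = (N:ℚ) / (D:ℚ) := by
    rw [eq_div_iff hD0, hN, hD]
    push_cast
    rw [hqnum, hrnum]
    ring
  have h2N : (2:ℤ) ∣ N := by rcases hNe with ⟨k, hk⟩; exact ⟨k, by omega⟩
  have hnN : padicNorm 2 (N:ℚ) ≤ 1/2 := by
    have hdvd : (((2:ℕ)^(1:ℕ) : ℕ) : ℤ) ∣ N := by simpa using h2N
    have := (padicNorm.dvd_iff_norm_le (p := 2)).mp hdvd
    calc padicNorm 2 (N:ℚ) ≤ ((2:ℕ):ℚ) ^ (-(1:ℕ):ℤ) := this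
      _ = 1/2 := by push_cast; norm_num
  have hnotD : ¬ (2:ℤ) ∣ D := by
    rcases hDo with ⟨k, hk⟩; rintro ⟨c, hc⟩; omega
  have hnD : padicNorm 2 (D:ℚ) = 1 := (padicNorm.int_eq_one_iff _).mpr hnotD
  rw [hsum, padicNorm.div, hnD, div_one]
  exact hnN

-- edge norm = 1 when parities agree
lemma edge_norm_one {a b : ℚ} (ha : padicNorm 2 a ≤ 1) (hb : padicNorm 2 b ≤ 1)
    (hab : (padicNorm 2 a = 1) ↔ (padicNorm 2 b = 1)) :
    padicNorm 2 (a + b - 1) = 1 := by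
  have hsum : padicNorm 2 (a + b) ≤ 1/2 := by
    by_cases h : padicNorm 2 a = 1
    · exact pn_add_le_half h (hab.mp h)
    · have h' : padicNorm 2 b ≠ 1 := fun hh => h (hab.mpr hh)
      have h1 : padicNorm 2 a ≤ 1/2 := pn_le_half (lt_of_le_of_ne ha h)
      have h2 : padicNorm 2 b ≤ 1/2 := pn_le_half (lt_of_le_of_ne hb h')
      exact le_trans padicNorm.nonarchimedean (max_le h1 h2)
  have hrw : a + b - 1 = (-1) + (a + b) := by ring
  have hne : padicNorm 2 (-1:ℚ) ≠ padicNorm 2 (a + b) := by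
    rw [padicNorm.neg, padicNorm.one]; intro hh; rw [← hh] at hsum; linarith
  rw [hrw, padicNorm.add_eq_max_of_ne hne, padicNorm.neg, padicNorm.one]
  have : padicNorm 2 (a + b) ≤ 1 := by linarith
  exact max_eq_left this

theorem stmt_11 (V : Type) [Fintype V] [DecidableEq V] (E : Finset (V × V))
    (M : ℝ) (hM : M = E.card + 1)
    (L : (V → ℚ) → ℝ)
    (hL : ∀ β, L β =
      M * ∑ j : V, (((padicNorm 2 (β j) : ℚ) : ℝ) + ((padicNorm 2 (β j - 1) : ℚ) : ℝ)) +
        ∑ e ∈ E, ((padicNorm 2 (β e.1 + β e.2 - 1) : ℚ) : ℝ))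
    (K : ℤ) :
    (∃ s : V → Bool, (K : ℝ) ≤ (E.filter (fun e => s e.1 ≠ s e.2)).card) ↔
    (∃ β : V → ℚ, L β ≤ M * (Fintype.card V) + E.card - K) := by
  constructor
  · rintro ⟨s, hs⟩
    set βs : V → ℚ := fun j => if s j then 1 else 0 with hβs
    refine ⟨βs, ?_⟩
    have hv : ∀ j : V, (((padicNorm 2 (βs j) : ℚ) : ℝ) + ((padicNorm 2 (βs j - 1) : ℚ) : ℝ)) = 1 := by
      intro j
      by_cases h : s j <;>
        simp [hβs, h, padicNorm.one, padicNorm.zero, show (0:ℚ)-1 = -1 from by ring,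
          padicNorm.neg]
    have he : ∀ e : V × V, ((padicNorm 2 (βs e.1 + βs e.2 - 1) : ℚ) : ℝ) =
        if s e.1 ≠ s e.2 then 0 else 1 := by
      intro e
      by_cases h1 : s e.1 <;> by_cases h2 : s e.2 <;>
        simp [hβs, h1, h2, padicNorm.one, padicNorm.zero,
          show (1:ℚ)+1-1 = 1 from by ring, show (1:ℚ)+0-1 = 0 from by ring,
          show (0:ℚ)+1-1 = 0 from by ring, show (0:ℚ)+0-1 = -1 from by ring,
          padicNorm.neg]
    have hve : (∑ j : V, (((padicNorm 2 (βs j) : ℚ) : ℝ) + ((padicNorm 2 (βs j - 1) : ℚ) : ℝ)))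
        = (Fintype.card V : ℝ) := by
      rw [Finset.sum_congr rfl (fun j _ => hv j), Finset.sum_const, Finset.card_univ]
      simp
    have hee : (∑ e ∈ E, ((padicNorm 2 (βs e.1 + βs e.2 - 1) : ℚ) : ℝ))
        = ((E.filter (fun e => ¬ (s e.1 ≠ s e.2))).card : ℝ) := by
      rw [Finset.sum_congr rfl (fun e _ => he e), Finset.sum_ite, Finset.sum_const,
        Finset.sum_const]
      simp
    have hcards : ((E.filter (fun e => s e.1 ≠ s e.2)).card : ℝ)
        + ((E.filter (fun e => ¬ (s e.1 ≠ s e.2))).card : ℝ) = (E.card : ℝ) := by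
      exact_mod_cast congrArg (Nat.cast : ℕ → ℝ)
        (Finset.card_filter_add_card_filter_not (s := E)
          (p := fun e => s e.1 ≠ s e.2))
    rw [hL, hve, hee]
    linarith
  · rintro ⟨β, hβ⟩
    rw [hL] at hβ
    rcases le_or_gt (K:ℝ) 0 with hK | hK
    · exact ⟨fun _ => true, le_trans hK (by positivity)⟩
    have hMpos : (0:ℝ) < M := by rw [hM]; positivity
    -- vertex terms ≥ 1
    have hv1 : ∀ j : V, (1:ℚ) ≤ padicNorm 2 (β j) + padicNorm 2 (β j - 1) := by
      intro j
      have h1 : padicNorm 2 ((β j) - (β j - 1)) ≤ max (padicNorm 2 (β j)) (padicNorm 2 (β j - 1)) :=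
        padicNorm.sub
      rw [show (β j) - (β j - 1) = 1 from by ring, padicNorm.one] at h1
      calc (1:ℚ) ≤ max (padicNorm 2 (β j)) (padicNorm 2 (β j - 1)) := h1
        _ ≤ _ := max_le_add_of_nonneg (padicNorm.nonneg _) (padicNorm.nonneg _)
    have hv1R : ∀ j : V, (1:ℝ) ≤ ((padicNorm 2 (β j) : ℚ) : ℝ) + ((padicNorm 2 (β j - 1) : ℚ) : ℝ) := by
      intro j; exact_mod_cast hv1 j
    have hEnonneg : (0:ℝ) ≤ ∑ e ∈ E, ((padicNorm 2 (β e.1 + β e.2 - 1) : ℚ) : ℝ) :=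
      Finset.sum_nonneg (fun e _ => by exact_mod_cast padicNorm.nonneg _)
    -- all norms ≤ 1
    have hle1 : ∀ j : V, padicNorm 2 (β j) ≤ 1 := by
      by_contra hcon
      push_neg at hcon
      obtain ⟨j0, hj0⟩ := hcon
      have h2le : (2:ℚ) ≤ padicNorm 2 (β j0) := pn_two_le hj0
      have hne : padicNorm 2 (β j0) ≠ padicNorm 2 (-1:ℚ) := by
        rw [padicNorm.neg, padicNorm.one]; intro hh; rw [hh] at hj0; exact lt_irrefl _ hj0
      have heq1 : padicNorm 2 (β j0 - 1) = padicNorm 2 (β j0) := by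
        rw [show β j0 - 1 = β j0 + (-1) from by ring, padicNorm.add_eq_max_of_ne hne,
          padicNorm.neg, padicNorm.one]
        exact max_eq_left (le_of_lt hj0)
      have hbig : (4:ℝ) ≤ ((padicNorm 2 (β j0) : ℚ) : ℝ) + ((padicNorm 2 (β j0 - 1) : ℚ) : ℝ) := by
        rw [heq1]
        have : (2:ℝ) ≤ ((padicNorm 2 (β j0) : ℚ) : ℝ) := by exact_mod_cast h2le
        push_cast
        linarith
      have hsumlb : ((Fintype.card V : ℝ) + 3)
          ≤ ∑ j : V, (((padicNorm 2 (β j) : ℚ) : ℝ) + ((padicNorm 2 (β j - 1) : ℚ) : ℝ)) := by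
        have := Finset.sum_le_sum (s := Finset.univ)
          (f := fun j : V => if j = j0 then (4:ℝ) else 1)
          (g := fun j : V => ((padicNorm 2 (β j) : ℚ) : ℝ) + ((padicNorm 2 (β j - 1) : ℚ) : ℝ))
          (fun j _ => by
            by_cases h : j = j0
            · subst h; simpa using hbig
            · simpa [h] using hv1R j)
        calc ((Fintype.card V : ℝ) + 3)
            = ∑ j : V, (if j = j0 then (4:ℝ) else 1) := by
              have : ∀ j : V, (if j = j0 then (4:ℝ) else 1)
                  = (if j = j0 then (3:ℝ) else 0) + 1 := by
                intro j; by_cases h : j = j0 <;> simp [h] <;> norm_num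
              rw [Finset.sum_congr rfl (fun j _ => this j), Finset.sum_add_distrib,
                Finset.sum_ite_eq' Finset.univ j0 (fun _ => (3:ℝ)), Finset.sum_const,
                Finset.card_univ]
              simp
              ring
          _ ≤ _ := this
      have : M * ((Fintype.card V : ℝ) + 3) ≤ M * (Fintype.card V) + E.card - K := by
        calc M * ((Fintype.card V : ℝ) + 3)
            ≤ M * ∑ j : V, (((padicNorm 2 (β j) : ℚ) : ℝ) + ((padicNorm 2 (β j - 1) : ℚ) : ℝ)) :=
              mul_le_mul_of_nonneg_left hsumlb (le_of_lt hMpos)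
          _ ≤ _ := by linarith
      rw [hM] at this
      have hKz : (1:ℝ) ≤ (K:ℝ) := by exact_mod_cast (by exact_mod_cast hK : (0:ℤ) < K)
      linarith
    have hle1' : ∀ j : V, padicNorm 2 (β j - 1) ≤ 1 := by
      intro j
      calc padicNorm 2 (β j - 1) ≤ max (padicNorm 2 (β j)) (padicNorm 2 (1:ℚ)) := padicNorm.sub
        _ ≤ 1 := by rw [padicNorm.one]; exact max_le (hle1 j) le_rfl
    -- define the cut
    set s : V → Bool := fun j => decide (padicNorm 2 (β j) = 1) with hsdef
    refine ⟨s, ?_⟩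
    have hkey : ∀ e : V × V, ¬ (s e.1 ≠ s e.2) → padicNorm 2 (β e.1 + β e.2 - 1) = 1 := by
      intro e he
      apply edge_norm_one (hle1 e.1) (hle1 e.2)
      have : s e.1 = s e.2 := by tauto
      rw [hsdef] at this
      simpa [decide_eq_decide] using this
    have hElb : ((E.filter (fun e => ¬ (s e.1 ≠ s e.2))).card : ℝ)
        ≤ ∑ e ∈ E, ((padicNorm 2 (β e.1 + β e.2 - 1) : ℚ) : ℝ) := by
      have := Finset.sum_le_sum (s := E)
        (f := fun e : V × V => if s e.1 ≠ s e.2 then (0:ℝ) else 1)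
        (g := fun e : V × V => ((padicNorm 2 (β e.1 + β e.2 - 1) : ℚ) : ℝ))
        (fun e _ => by
          by_cases h : s e.1 ≠ s e.2
          · rw [if_pos h]
            exact_mod_cast padicNorm.nonneg _
          · rw [if_neg h, hkey e h]; norm_num)
      calc ((E.filter (fun e => ¬ (s e.1 ≠ s e.2))).card : ℝ)
          = ∑ e ∈ E, (if s e.1 ≠ s e.2 then (0:ℝ) else 1) := by
            rw [Finset.sum_ite, Finset.sum_const, Finset.sum_const]; simp
        _ ≤ _ := this
    have hVlb : ((Fintype.card V : ℝ))
        ≤ ∑ j : V, (((padicNorm 2 (β j) : ℚ) : ℝ) + ((padicNorm 2 (β j - 1) : ℚ) : ℝ)) := by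
      calc ((Fintype.card V : ℝ)) = ∑ _j : V, (1:ℝ) := by
            rw [Finset.sum_const, Finset.card_univ]; simp
        _ ≤ _ := Finset.sum_le_sum (fun j _ => hv1R j)
    have hcards : ((E.filter (fun e => s e.1 ≠ s e.2)).card : ℝ)
        + ((E.filter (fun e => ¬ (s e.1 ≠ s e.2))).card : ℝ) = (E.card : ℝ) := by
      exact_mod_cast congrArg (Nat.cast : ℕ → ℝ)
        (Finset.card_filter_add_card_filter_not (s := E)
          (p := fun e => s e.1 ≠ s e.2))
    have hMn : M * (Fintype.card V : ℝ)
        ≤ M * ∑ j : V, (((padicNorm 2 (β j) : ℚ) : ℝ) + ((padicNorm 2 (β j - 1) : ℚ) : ℝ)) :=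
      mul_le_mul_of_nonneg_left hVlb (le_of_lt hMpos)
    linarith
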